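/- If A# ⊗̂ B# is approximately amenable, then the direct sum A ⊕ B is approximately amenable. -/

import Mathlib

open Filter Topology MeasureTheory
set_option linter.unusedSectionVars false

/-- A Banach bimodule structure over a (not necessarily unital) normed algebra `A`.
`l a x` is the left action `a • x` and `r a x` is the right action `x • a`. -/
structure BBimod (A X : Type*) [NonUnitalNormedRing A] [NormedSpace ℂ A]
    [NormedAddCommGroup X] [NormedSpace ℂ X] where
  l : A →L[ℂ] X →L[ℂ] X
  r : A →L[ℂ] X →L[ℂ] X
  l_mul : ∀ a b x, l (a * b) x = l a (l b x)
  r_mul : ∀ a b x, r (a * b) x = r b (r a x)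
  lr : ∀ a b x, l a (r b x) = r b (l a x)

namespace BBimod

variable {A X : Type*} [NonUnitalNormedRing A] [NormedSpace ℂ A]
    [NormedAddCommGroup X] [NormedSpace ℂ X]

/-- The dual bimodule structure on `X →L[ℂ] ℂ`:
`(a • f) x = f (x • a)` and `(f • a) x = f (a • x)`. -/
noncomputable def dual (M : BBimod A X) : BBimod A (X →L[ℂ] ℂ) where
  l := (ContinuousLinearMap.compL ℂ X X ℂ).flip.comp M.r
  r := (ContinuousLinearMap.compL ℂ X X ℂ).flip.comp M.l
  l_mul := by intro a b f; ext x; simp [M.r_mul a b x]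
  r_mul := by intro a b f; ext x; simp [M.l_mul a b x]
  lr := by intro a b f; ext x; simp [M.lr]

/-- `D` is a derivation: `D (a b) = a • D b + D a • b`. -/
def IsDeriv (M : BBimod A X) (D : A →L[ℂ] X) : Prop :=
  ∀ a b, D (a * b) = M.l a (D b) + M.r b (D a)

/-- `D` is inner: `D a = a • x - x • a` for some `x`. -/
def IsInner (M : BBimod A X) (D : A →L[ℂ] X) : Prop :=
  ∃ x, ∀ a, D a = M.l a x - M.r a x

/-- `D` is approximately inner: a net of inner derivations converges to `D`
in the strong operator topology. -/
def IsApproxInner (M : BBimod A X) (D : A →L[ℂ] X) : Prop :=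
  ∃ (ι : Type) (lf : Filter ι) (x : ι → X), lf.NeBot ∧
    ∀ a, Tendsto (fun i => M.l a (x i) - M.r a (x i)) lf (𝓝 (D a))

/-- `D` is boundedly approximately inner: the approximating net of inner derivations
is uniformly bounded in operator norm. -/
def IsBddApproxInner (M : BBimod A X) (D : A →L[ℂ] X) : Prop :=
  ∃ (ι : Type) (lf : Filter ι) (x : ι → X) (K : ℝ), lf.NeBot ∧
    (∀ i a, ‖M.l a (x i) - M.r a (x i)‖ ≤ K * ‖a‖) ∧
    ∀ a, Tendsto (fun i => M.l a (x i) - M.r a (x i)) lf (𝓝 (D a))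

/-- `D` is approximately semi-inner: `D a = lim_i (a • m i - n i • a)`. -/
def IsApproxSemiInner (M : BBimod A X) (D : A →L[ℂ] X) : Prop :=
  ∃ (ι : Type) (lf : Filter ι) (m n : ι → X), lf.NeBot ∧
    ∀ a, Tendsto (fun i => M.l a (m i) - M.r a (n i)) lf (𝓝 (D a))

/-- The bimodule `X` is neo-unital: `X = A • X • A`. -/
def NeoUnital (M : BBimod A X) : Prop :=
  ∀ x : X, ∃ a b y, x = M.l a (M.r b y)

/-- A derivation into the dual module is boundedly weak*-approximately inner. -/
def IsBddWeakStarApproxInner (M : BBimod A X) (D : A →L[ℂ] (X →L[ℂ] ℂ)) : Prop :=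
  ∃ (ι : Type) (lf : Filter ι) (f : ι → (X →L[ℂ] ℂ)) (K : ℝ), lf.NeBot ∧
    (∀ i, ‖f i‖ ≤ K) ∧
    ∀ (a : A) (x : X),
      Tendsto (fun i => (M.dual.l a (f i) - M.dual.r a (f i)) x) lf (𝓝 (D a x))

end BBimod

/-- A Banach algebra is approximately amenable if every continuous derivation into
the dual of a Banach bimodule is approximately inner. -/
def ApproxAmenable (A : Type*) [NonUnitalNormedRing A] [NormedSpace ℂ A] : Prop :=
  ∀ (X : Type) [NormedAddCommGroup X] [NormedSpace ℂ X] [CompleteSpace X]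
    (M : BBimod A X) (D : A →L[ℂ] (X →L[ℂ] ℂ)),
    M.dual.IsDeriv D → M.dual.IsApproxInner D

/-- A Banach algebra is boundedly approximately amenable if every continuous derivation
into the dual of a Banach bimodule is boundedly approximately inner. -/
def BddApproxAmenable (A : Type*) [NonUnitalNormedRing A] [NormedSpace ℂ A] : Prop :=
  ∀ (X : Type) [NormedAddCommGroup X] [NormedSpace ℂ X] [CompleteSpace X]
    (M : BBimod A X) (D : A →L[ℂ] (X →L[ℂ] ℂ)),
    M.dual.IsDeriv D → M.dual.IsBddApproxInner D

/-- A Banach algebra is boundedly approximately contractible if every continuous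
derivation into any Banach bimodule is boundedly approximately inner. -/
def BddApproxContractible (A : Type*) [NonUnitalNormedRing A] [NormedSpace ℂ A] : Prop :=
  ∀ (X : Type) [NormedAddCommGroup X] [NormedSpace ℂ X] [CompleteSpace X]
    (M : BBimod A X) (D : A →L[ℂ] X),
    M.IsDeriv D → M.IsBddApproxInner D

/-- A Banach algebra is amenable if every continuous derivation into the dual of a
Banach bimodule is inner. -/
def Amenable (A : Type*) [NonUnitalNormedRing A] [NormedSpace ℂ A] : Prop :=
  ∀ (X : Type) [NormedAddCommGroup X] [NormedSpace ℂ X] [CompleteSpace X]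
    (M : BBimod A X) (D : A →L[ℂ] (X →L[ℂ] ℂ)),
    M.dual.IsDeriv D → M.dual.IsInner D

/-- `A` has a bounded (two-sided) approximate identity. -/
def HasBAI (A : Type*) [NonUnitalNormedRing A] : Prop :=
  ∃ (ι : Type) (lf : Filter ι) (e : ι → A) (K : ℝ), lf.NeBot ∧
    (∀ i, ‖e i‖ ≤ K) ∧
    ∀ a : A, Tendsto (fun i => e i * a) lf (𝓝 a) ∧ Tendsto (fun i => a * e i) lf (𝓝 a)

/-- A witness that the Banach algebra `C` is (isometrically isomorphic to) the projective
tensor product `A ⊗̂ B`: a contractive bilinear multiplicative map with dense span satisfying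
the universal property of the projective tensor norm. -/
structure ProjTensor (A B C : Type*) [NonUnitalNormedRing A] [NormedSpace ℂ A]
    [NonUnitalNormedRing B] [NormedSpace ℂ B]
    [NonUnitalNormedRing C] [NormedSpace ℂ C] where
  tp : A →L[ℂ] B →L[ℂ] C
  mk_mul : ∀ a a' b b', tp (a * a') (b * b') = tp a b * tp a' b'
  norm_mk_le : ∀ a b, ‖tp a b‖ ≤ ‖a‖ * ‖b‖
  dense_span : Dense
    ((Submodule.span ℂ (Set.range fun p : A × B => tp p.1 p.2) : Submodule ℂ C) : Set C)
  lift : ∀ (E : Type) [NormedAddCommGroup E] [NormedSpace ℂ E] [CompleteSpace E]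
    (φ : A →L[ℂ] B →L[ℂ] E), ∃ T : C →L[ℂ] E, ‖T‖ ≤ ‖φ‖ ∧ ∀ a b, T (tp a b) = φ a b

/-- A witness that the Banach space `T` is the projective tensor product `E ⊗̂ F`
of Banach spaces. -/
structure ProjTensorSp (E F T : Type*) [NormedAddCommGroup E] [NormedSpace ℂ E]
    [NormedAddCommGroup F] [NormedSpace ℂ F]
    [NormedAddCommGroup T] [NormedSpace ℂ T] where
  tp : E →L[ℂ] F →L[ℂ] T
  norm_mk_le : ∀ e f, ‖tp e f‖ ≤ ‖e‖ * ‖f‖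
  dense_span : Dense
    ((Submodule.span ℂ (Set.range fun p : E × F => tp p.1 p.2) : Submodule ℂ T) : Set T)
  lift : ∀ (W : Type) [NormedAddCommGroup W] [NormedSpace ℂ W] [CompleteSpace W]
    (φ : E →L[ℂ] F →L[ℂ] W), ∃ S : T →L[ℂ] W, ‖S‖ ≤ ‖φ‖ ∧ ∀ e f, S (tp e f) = φ e f

/-- A witness that the unital Banach algebra `A'` is the unitization `A#` of `A`. -/
structure IsUnitization (A A' : Type*) [NonUnitalNormedRing A] [NormedSpace ℂ A]
    [NormedRing A'] [NormedAlgebra ℂ A'] where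
  ι : A →L[ℂ] A'
  ι_mul : ∀ a b, ι (a * b) = ι a * ι b
  ι_norm : ∀ a, ‖ι a‖ = ‖a‖
  decomp : ∀ x : A', ∃! p : ℂ × A, x = algebraMap ℂ A' p.1 + ι p.2


section Aux

namespace IsUnitization

variable {A A' : Type*} [NonUnitalNormedRing A] [NormedSpace ℂ A] [CompleteSpace A]
  [NormedRing A'] [NormedAlgebra ℂ A'] [CompleteSpace A']

/-- The canonical map `ℂ × A → A'`. -/
noncomputable def addL (u : IsUnitization A A') : (ℂ × A) →L[ℂ] A' :=
  (ContinuousLinearMap.fst ℂ ℂ A).smulRight (1 : A') + u.ι.comp (ContinuousLinearMap.snd ℂ ℂ A)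

lemma addL_apply (u : IsUnitization A A') (p : ℂ × A) :
    u.addL p = algebraMap ℂ A' p.1 + u.ι p.2 := by
  simp [addL, Algebra.algebraMap_eq_smul_one]

lemma addL_bijective (u : IsUnitization A A') : Function.Bijective u.addL := by
  constructor
  · intro p q hpq
    obtain ⟨r, -, hu⟩ := u.decomp (u.addL q)
    have hp := hu p (by show u.addL q = algebraMap ℂ A' p.1 + u.ι p.2; rw [← addL_apply, hpq])
    have hq := hu q (by show u.addL q = algebraMap ℂ A' q.1 + u.ι q.2; rw [← addL_apply])
    rw [hp, hq]
  · intro x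
    obtain ⟨p, hp, -⟩ := u.decomp x
    exact ⟨p, by rw [addL_apply, ← hp]⟩

/-- The equivalence `ℂ × A ≃ A'`. -/
noncomputable def e (u : IsUnitization A A') : (ℂ × A) ≃L[ℂ] A' :=
  ContinuousLinearEquiv.ofBijective u.addL
    (LinearMap.ker_eq_bot.2 u.addL_bijective.1)
    (LinearMap.range_eq_top.2 u.addL_bijective.2)

lemma e_apply (u : IsUnitization A A') (p : ℂ × A) : u.e p = u.addL p := rfl

/-- The character (scalar part). -/
noncomputable def ch (u : IsUnitization A A') : A' →L[ℂ] ℂ :=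
  (ContinuousLinearMap.fst ℂ ℂ A).comp (u.e.symm : A' →L[ℂ] ℂ × A)

/-- The `A`-part. -/
noncomputable def pr (u : IsUnitization A A') : A' →L[ℂ] A :=
  (ContinuousLinearMap.snd ℂ ℂ A).comp (u.e.symm : A' →L[ℂ] ℂ × A)

lemma ch_pr (u : IsUnitization A A') (x : A') :
    algebraMap ℂ A' (u.ch x) + u.ι (u.pr x) = x := by
  have h := u.e.apply_symm_apply x
  rw [e_apply, addL_apply] at h
  exact h

lemma ch_apply (u : IsUnitization A A') (α : ℂ) (a : A) :
    u.ch (algebraMap ℂ A' α + u.ι a) = α := by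
  have : algebraMap ℂ A' α + u.ι a = u.e (α, a) := by rw [e_apply, addL_apply]
  rw [this]; simp [ch]

lemma pr_apply (u : IsUnitization A A') (α : ℂ) (a : A) :
    u.pr (algebraMap ℂ A' α + u.ι a) = a := by
  have : algebraMap ℂ A' α + u.ι a = u.e (α, a) := by rw [e_apply, addL_apply]
  rw [this]; simp [pr]

lemma ch_iota (u : IsUnitization A A') (a : A) : u.ch (u.ι a) = 0 := by
  have := u.ch_apply 0 a; simpa using this

lemma pr_iota (u : IsUnitization A A') (a : A) : u.pr (u.ι a) = a := by
  have := u.pr_apply 0 a; simpa using this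

lemma ch_one (u : IsUnitization A A') : u.ch 1 = 1 := by
  have := u.ch_apply 1 0; simpa using this

lemma pr_one (u : IsUnitization A A') : u.pr 1 = 0 := by
  have := u.pr_apply 1 0; simpa using this

lemma iota_inj (u : IsUnitization A A') : Function.Injective u.ι := by
  intro a b hab
  have h := u.ι_norm (a - b)
  rw [map_sub, hab, sub_self, norm_zero] at h
  exact sub_eq_zero.1 (norm_eq_zero.1 h.symm)

lemma smul_mul (u : IsUnitization A A') (lam : ℂ) (x y : A) :
    (lam • x) * y = lam • (x * y) := by
  apply u.iota_inj
  rw [u.ι_mul, _root_.map_smul, _root_.map_smul, u.ι_mul, smul_mul_assoc]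

lemma mul_smul' (u : IsUnitization A A') (lam : ℂ) (x y : A) :
    x * (lam • y) = lam • (x * y) := by
  apply u.iota_inj
  rw [u.ι_mul, _root_.map_smul, _root_.map_smul, u.ι_mul, mul_smul_comm]

lemma mul_decomp (u : IsUnitization A A') (x y : A') :
    x * y = algebraMap ℂ A' (u.ch x * u.ch y)
      + u.ι (u.ch x • u.pr y + u.ch y • u.pr x + u.pr x * u.pr y) := by
  conv_lhs => rw [← u.ch_pr x, ← u.ch_pr y]
  rw [add_mul, mul_add, mul_add, ← map_mul, ← u.ι_mul, map_add, map_add, _root_.map_smul, _root_.map_smul,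
    Algebra.smul_def, Algebra.smul_def, ← Algebra.commutes (u.ch y) (u.ι (u.pr x))]
  abel

lemma ch_mul (u : IsUnitization A A') (x y : A') : u.ch (x * y) = u.ch x * u.ch y := by
  rw [u.mul_decomp x y, ch_apply]

lemma pr_mul (u : IsUnitization A A') (x y : A') :
    u.pr (x * y) = u.ch x • u.pr y + u.ch y • u.pr x + u.pr x * u.pr y := by
  rw [u.mul_decomp x y, pr_apply]

end IsUnitization

end Aux


namespace BBimod

variable {A X : Type*} [NonUnitalNormedRing A] [NormedSpace ℂ A]
    [NormedAddCommGroup X] [NormedSpace ℂ X]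

lemma dual_l_apply (M : BBimod A X) (a : A) (g : X →L[ℂ] ℂ) :
    M.dual.l a g = g.comp (M.r a) := by
  ext x; simp [dual]

lemma dual_r_apply (M : BBimod A X) (a : A) (g : X →L[ℂ] ℂ) :
    M.dual.r a g = g.comp (M.l a) := by
  ext x; simp [dual]

end BBimod

namespace ProjTensor

variable {A B C : Type*} [NonUnitalNormedRing A] [NormedSpace ℂ A]
  [NonUnitalNormedRing B] [NormedSpace ℂ B] [NonUnitalNormedRing C] [NormedSpace ℂ C]
  (t : ProjTensor A B C)

lemma induction_tp {P : C → Prop} (h0 : P 0) (hadd : ∀ x y, P x → P y → P (x + y))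
    (helem : ∀ a b, P (t.tp a b)) {x : C}
    (hx : x ∈ Submodule.span ℂ (Set.range fun p : A × B => t.tp p.1 p.2)) : P x := by
  set S := Set.range fun p : A × B => t.tp p.1 p.2 with hS
  have hsmul : ∀ (lam : ℂ) s, s ∈ S → lam • s ∈ S := by
    rintro lam s ⟨⟨a, b⟩, rfl⟩
    refine ⟨(lam • a, b), ?_⟩
    show t.tp (lam • a) b = lam • t.tp a b
    rw [_root_.map_smul]; rfl
  have hclos : x ∈ AddSubmonoid.closure S := by
    let T : Submodule ℂ C :=
      { carrier := AddSubmonoid.closure S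
        add_mem' := fun h1 h2 => add_mem h1 h2
        zero_mem' := zero_mem _
        smul_mem' := by
          intro lam y hy
          refine AddSubmonoid.closure_induction
            (fun s hs => AddSubmonoid.subset_closure (hsmul lam s hs))
            (by simpa using zero_mem (AddSubmonoid.closure S))
            (fun a b _ _ ha hb => by rw [smul_add]; exact add_mem ha hb) hy }
    have hle : Submodule.span ℂ S ≤ T := Submodule.span_le.2 AddSubmonoid.subset_closure
    exact hle hx
  exact AddSubmonoid.closure_induction
    (fun s hs => by obtain ⟨⟨a, b⟩, rfl⟩ := hs; exact helem a b)
    h0 (fun a b _ _ => hadd a b) hclos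

lemma ext_tp {E : Type*} [TopologicalSpace E] [T2Space E] {f g : C → E}
    (hf : Continuous f) (hg : Continuous g) (h0 : f 0 = g 0)
    (hadd : ∀ x y, f x = g x → f y = g y → f (x + y) = g (x + y))
    (helem : ∀ a b, f (t.tp a b) = g (t.tp a b)) : ∀ x, f x = g x := by
  have heq : Set.EqOn f g
      ((Submodule.span ℂ (Set.range fun p : A × B => t.tp p.1 p.2) : Submodule ℂ C) : Set C) :=
    fun x hx => t.induction_tp h0 hadd helem hx
  intro x
  exact congrFun (Continuous.ext_on t.dense_span hf hg heq) x

end ProjTensor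

section NU

variable {P X : Type*} [NonUnitalNormedRing P] [NormedSpace ℂ P]
  [NormedAddCommGroup X] [NormedSpace ℂ X]

/-- Multiplication in the unitization `ℂ × P`. -/
def uprod (q q' : ℂ × P) : ℂ × P := (q.1 * q'.1, q.1 • q'.2 + q'.1 • q.2 + q.2 * q'.2)

/-- Extension of a module action to the unitization. -/
noncomputable def NlOf (L : P →L[ℂ] X →L[ℂ] X) : (ℂ × P) →L[ℂ] (X →L[ℂ] X) :=
  (ContinuousLinearMap.fst ℂ ℂ P).smulRight (ContinuousLinearMap.id ℂ X)
    + L.comp (ContinuousLinearMap.snd ℂ ℂ P)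

lemma NlOf_apply (L : P →L[ℂ] X →L[ℂ] X) (q : ℂ × P) (x : X) :
    NlOf L q x = q.1 • x + L q.2 x := by
  simp [NlOf]

lemma NlOf_uprod_left (L : P →L[ℂ] X →L[ℂ] X) (hL : ∀ p p' x, L (p * p') x = L p (L p' x))
    (q q' : ℂ × P) : NlOf L (uprod q q') = (NlOf L q).comp (NlOf L q') := by
  ext x
  simp only [ContinuousLinearMap.coe_comp', Function.comp_apply, NlOf_apply, uprod,
    map_add, _root_.map_smul, ContinuousLinearMap.add_apply, ContinuousLinearMap.smul_apply,
    smul_add, smul_smul, hL]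
  module

lemma NlOf_uprod_right (L : P →L[ℂ] X →L[ℂ] X) (hL : ∀ p p' x, L (p * p') x = L p' (L p x))
    (q q' : ℂ × P) : NlOf L (uprod q q') = (NlOf L q').comp (NlOf L q) := by
  ext x
  simp only [ContinuousLinearMap.coe_comp', Function.comp_apply, NlOf_apply, uprod,
    map_add, _root_.map_smul, ContinuousLinearMap.add_apply, ContinuousLinearMap.smul_apply,
    smul_add, smul_smul, hL]
  module

lemma NlOf_comm (L R : P →L[ℂ] X →L[ℂ] X) (hLR : ∀ p p' x, L p (R p' x) = R p' (L p x))
    (q q' : ℂ × P) : (NlOf L q).comp (NlOf R q') = (NlOf R q').comp (NlOf L q) := by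
  ext x
  simp only [ContinuousLinearMap.coe_comp', Function.comp_apply, NlOf_apply,
    map_add, _root_.map_smul, smul_add, smul_smul, hLR]
  module

lemma deriv_uprod (Ml Mr : P →L[ℂ] X →L[ℂ] X) (D : P →L[ℂ] (X →L[ℂ] ℂ))
    (hd : ∀ p p', D (p * p') = (D p').comp (Mr p) + (D p).comp (Ml p')) (q q' : ℂ × P) :
    D (uprod q q').2 = (D q'.2).comp (NlOf Mr q) + (D q.2).comp (NlOf Ml q') := by
  ext x
  simp only [ContinuousLinearMap.coe_comp', Function.comp_apply, NlOf_apply, uprod,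
    map_add, _root_.map_smul, ContinuousLinearMap.add_apply, ContinuousLinearMap.smul_apply,
    hd, smul_eq_mul]
  abel

end NU

section Mu

variable {A B A' B' : Type*}
  [NonUnitalNormedRing A] [NormedSpace ℂ A] [CompleteSpace A]
  [NonUnitalNormedRing B] [NormedSpace ℂ B] [CompleteSpace B]
  [NormedRing A'] [NormedAlgebra ℂ A'] [CompleteSpace A']
  [NormedRing B'] [NormedAlgebra ℂ B'] [CompleteSpace B']

/-- The bilinear map realizing the quotient `A' ⊗ B' → (A ⊕ B)#`. -/
noncomputable def muT (uA : IsUnitization A A') (uB : IsUnitization B B') :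
    A' →L[ℂ] B' →L[ℂ] ℂ × (A × B) :=
  LinearMap.mkContinuous₂
    (LinearMap.mk₂ ℂ
      (fun a' b' => (uA.ch a' * uB.ch b', (uB.ch b' • uA.pr a', uA.ch a' • uB.pr b')))
      (fun a1 a2 b => by
        simp [map_add, add_mul, smul_add, add_smul, Prod.mk_add_mk])
      (fun c m n => by
        have h1 : uA.ch (c • m) * uB.ch n = c • (uA.ch m * uB.ch n) := by
          rw [_root_.map_smul, smul_eq_mul, smul_eq_mul, mul_assoc]
        have h2 : uB.ch n • uA.pr (c • m) = c • (uB.ch n • uA.pr m) := by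
          rw [_root_.map_smul, smul_comm]
        have h3 : uA.ch (c • m) • uB.pr n = c • (uA.ch m • uB.pr n) := by
          rw [_root_.map_smul, smul_assoc]
        rw [h1, h2, h3]; rfl)
      (fun m n1 n2 => by
        simp [map_add, mul_add, smul_add, add_smul, Prod.mk_add_mk])
      (fun c m n => by
        have h1 : uA.ch m * uB.ch (c • n) = c • (uA.ch m * uB.ch n) := by
          rw [_root_.map_smul, smul_eq_mul, smul_eq_mul, mul_left_comm]
        have h2 : uB.ch (c • n) • uA.pr m = c • (uB.ch n • uA.pr m) := by
          rw [_root_.map_smul, smul_assoc]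
        have h3 : uA.ch m • uB.pr (c • n) = c • (uA.ch m • uB.pr n) := by
          rw [_root_.map_smul, smul_comm]
        rw [h1, h2, h3]; rfl))
    ((‖uA.ch‖ + ‖uA.pr‖) * (‖uB.ch‖ + ‖uB.pr‖))
    (fun x y => by
      have hca := uA.ch.le_opNorm x
      have hpa := uA.pr.le_opNorm x
      have hcb := uB.ch.le_opNorm y
      have hpb := uB.pr.le_opNorm y
      have h1 : (0:ℝ) ≤ ‖uA.ch‖ := norm_nonneg _
      have h2 : (0:ℝ) ≤ ‖uA.pr‖ := norm_nonneg _
      have h3 : (0:ℝ) ≤ ‖uB.ch‖ := norm_nonneg _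
      have h4 : (0:ℝ) ≤ ‖uB.pr‖ := norm_nonneg _
      have h5 : (0:ℝ) ≤ ‖x‖ := norm_nonneg _
      have h6 : (0:ℝ) ≤ ‖y‖ := norm_nonneg _
      show ‖((uA.ch x * uB.ch y, (uB.ch y • uA.pr x, uA.ch x • uB.pr y)) : ℂ × (A × B))‖ ≤ _
      rw [Prod.norm_def, Prod.norm_def]
      simp only [norm_mul, norm_smul]
      refine max_le ?_ (max_le ?_ ?_) <;>
        nlinarith [norm_nonneg (uA.ch x), norm_nonneg (uB.ch y), norm_nonneg (uA.pr x),
          norm_nonneg (uB.pr y), mul_le_mul hca hcb (norm_nonneg _) (by positivity),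
          mul_le_mul hcb hpa (norm_nonneg _) (by positivity),
          mul_le_mul hca hpb (norm_nonneg _) (by positivity)])

lemma muT_apply (uA : IsUnitization A A') (uB : IsUnitization B B') (a' : A') (b' : B') :
    muT uA uB a' b' = (uA.ch a' * uB.ch b', (uB.ch b' • uA.pr a', uA.ch a' • uB.pr b')) := rfl

lemma muT_mul (uA : IsUnitization A A') (uB : IsUnitization B B') (a a2 : A') (b b2 : B') :
    muT uA uB (a * a2) (b * b2) = uprod (muT uA uB a b) (muT uA uB a2 b2) := by
  refine Prod.ext ?_ (Prod.ext ?_ ?_)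
  · simp only [muT_apply, uprod, uA.ch_mul, uB.ch_mul]
    ring
  · simp only [muT_apply, uprod, uA.pr_mul, uB.ch_mul, Prod.fst_add, Prod.snd_add,
      Prod.smul_fst, Prod.smul_snd, Prod.fst_mul, Prod.snd_mul]
    rw [uA.smul_mul, uA.mul_smul']
    simp only [smul_add, smul_smul]
    module
  · simp only [muT_apply, uprod, uB.pr_mul, uA.ch_mul, Prod.fst_add, Prod.snd_add,
      Prod.smul_fst, Prod.smul_snd, Prod.fst_mul, Prod.snd_mul]
    rw [uB.smul_mul, uB.mul_smul']
    simp only [smul_add, smul_smul]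
    module

end Mu

set_option maxHeartbeats 2000000 in
/-- if `A# ⊗̂ B#` is approximately amenable, then the direct sum
`A ⊕ B` is approximately amenable. -/
theorem approxAmenable_directSum_of_unitization_tensor
    {A B A' B' C : Type*}
    [NonUnitalNormedRing A] [NormedSpace ℂ A] [CompleteSpace A]
    [NonUnitalNormedRing B] [NormedSpace ℂ B] [CompleteSpace B]
    [NormedRing A'] [NormedAlgebra ℂ A'] [CompleteSpace A']
    [NormedRing B'] [NormedAlgebra ℂ B'] [CompleteSpace B']
    [NonUnitalNormedRing C] [NormedSpace ℂ C] [CompleteSpace C]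
    (uA : IsUnitization A A') (uB : IsUnitization B B')
    (t : ProjTensor A' B' C)
    (h : ApproxAmenable C) : ApproxAmenable (A × B) := by
  intro X _i1 _i2 _i3 M D hder
  classical
  obtain ⟨Tl, -, hTl0⟩ := t.lift (X →L[ℂ] X)
    ((ContinuousLinearMap.compL ℂ B' (ℂ × (A × B)) (X →L[ℂ] X) (NlOf M.l)).comp (muT uA uB))
  obtain ⟨Tr, -, hTr0⟩ := t.lift (X →L[ℂ] X)
    ((ContinuousLinearMap.compL ℂ B' (ℂ × (A × B)) (X →L[ℂ] X) (NlOf M.r)).comp (muT uA uB))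
  obtain ⟨TD, -, hTD0⟩ := t.lift (X →L[ℂ] ℂ)
    ((ContinuousLinearMap.compL ℂ B' (ℂ × (A × B)) (X →L[ℂ] ℂ)
      (D.comp (ContinuousLinearMap.snd ℂ ℂ (A × B)))).comp (muT uA uB))
  have hTl : ∀ a b, Tl (t.tp a b) = NlOf M.l (muT uA uB a b) := fun a b => by
    simpa using hTl0 a b
  have hTr : ∀ a b, Tr (t.tp a b) = NlOf M.r (muT uA uB a b) := fun a b => by
    simpa using hTr0 a b
  have hTD : ∀ a b, TD (t.tp a b) = D (muT uA uB a b).2 := fun a b => by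
    simpa using hTD0 a b
  have hd : ∀ p p' : A × B, D (p * p') = (D p').comp (M.r p) + (D p).comp (M.l p') := by
    intro p p'
    rw [hder p p', M.dual_l_apply, M.dual_r_apply]
  -- multiplicativity of the lifted actions
  have keyl : ∀ c c', Tl (c * c') = (Tl c).comp (Tl c') := by
    have base : ∀ a b c', Tl (t.tp a b * c') = (Tl (t.tp a b)).comp (Tl c') := by
      intro a b
      refine t.ext_tp (f := fun c' => Tl (t.tp a b * c'))
        (g := fun c' => (Tl (t.tp a b)).comp (Tl c'))
        (Tl.continuous.comp (continuous_mul_left _))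
        (Continuous.clm_comp continuous_const Tl.continuous) (by simp) ?_ ?_
      · intro x y hx hy
        simp only [mul_add, map_add, ContinuousLinearMap.comp_add, hx, hy]
      · intro a2 b2
        rw [← t.mk_mul, hTl, hTl, hTl, muT_mul]
        exact NlOf_uprod_left M.l M.l_mul _ _
    intro c c'
    refine t.ext_tp (f := fun c => Tl (c * c'))
      (g := fun c => (Tl c).comp (Tl c'))
      (Tl.continuous.comp (continuous_mul_right _))
      (Continuous.clm_comp Tl.continuous continuous_const) (by simp) ?_ ?_ c
    · intro x y hx hy
      simp only [add_mul, map_add, ContinuousLinearMap.add_comp, hx, hy]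
    · intro a b; exact base a b c'
  have keyr : ∀ c c', Tr (c * c') = (Tr c').comp (Tr c) := by
    have base : ∀ a b c', Tr (t.tp a b * c') = (Tr c').comp (Tr (t.tp a b)) := by
      intro a b
      refine t.ext_tp (f := fun c' => Tr (t.tp a b * c'))
        (g := fun c' => (Tr c').comp (Tr (t.tp a b)))
        (Tr.continuous.comp (continuous_mul_left _))
        (Continuous.clm_comp Tr.continuous continuous_const) (by simp) ?_ ?_
      · intro x y hx hy
        simp only [mul_add, map_add, ContinuousLinearMap.add_comp, hx, hy]
      · intro a2 b2
        rw [← t.mk_mul, hTr, hTr, hTr, muT_mul]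
        exact NlOf_uprod_right M.r M.r_mul _ _
    intro c c'
    refine t.ext_tp (f := fun c => Tr (c * c'))
      (g := fun c => (Tr c').comp (Tr c))
      (Tr.continuous.comp (continuous_mul_right _))
      (Continuous.clm_comp continuous_const Tr.continuous) (by simp) ?_ ?_ c
    · intro x y hx hy
      simp only [add_mul, map_add, ContinuousLinearMap.comp_add, hx, hy]
    · intro a b; exact base a b c'
  have keylr : ∀ c c', (Tl c).comp (Tr c') = (Tr c').comp (Tl c) := by
    have base : ∀ a b c', (Tl (t.tp a b)).comp (Tr c') = (Tr c').comp (Tl (t.tp a b)) := by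
      intro a b
      refine t.ext_tp (f := fun c' => (Tl (t.tp a b)).comp (Tr c'))
        (g := fun c' => (Tr c').comp (Tl (t.tp a b)))
        (Continuous.clm_comp continuous_const Tr.continuous)
        (Continuous.clm_comp Tr.continuous continuous_const) (by simp) ?_ ?_
      · intro x y hx hy
        simp only [map_add, ContinuousLinearMap.comp_add, ContinuousLinearMap.add_comp, hx, hy]
      · intro a2 b2
        rw [hTl, hTr]
        exact NlOf_comm M.l M.r M.lr _ _
    intro c c'
    refine t.ext_tp (f := fun c => (Tl c).comp (Tr c'))
      (g := fun c => (Tr c').comp (Tl c))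
      (Continuous.clm_comp Tl.continuous continuous_const)
      (Continuous.clm_comp continuous_const Tl.continuous) (by simp) ?_ ?_ c
    · intro x y hx hy
      simp only [map_add, ContinuousLinearMap.comp_add, ContinuousLinearMap.add_comp, hx, hy]
    · intro a b; exact base a b c'
  have keyd : ∀ c c', TD (c * c') = (TD c').comp (Tr c) + (TD c).comp (Tl c') := by
    have base : ∀ a b c', TD (t.tp a b * c')
        = (TD c').comp (Tr (t.tp a b)) + (TD (t.tp a b)).comp (Tl c') := by
      intro a b
      refine t.ext_tp (f := fun c' => TD (t.tp a b * c'))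
        (g := fun c' => (TD c').comp (Tr (t.tp a b)) + (TD (t.tp a b)).comp (Tl c'))
        (TD.continuous.comp (continuous_mul_left _))
        ((Continuous.clm_comp TD.continuous continuous_const).add
          (Continuous.clm_comp continuous_const Tl.continuous)) (by simp) ?_ ?_
      · intro x y hx hy
        simp only [mul_add, map_add, ContinuousLinearMap.comp_add,
          ContinuousLinearMap.add_comp, hx, hy]
        abel
      · intro a2 b2
        rw [← t.mk_mul, hTD, hTD, hTD, hTl, hTr, muT_mul]
        exact deriv_uprod M.l M.r D hd _ _
    intro c c'
    refine t.ext_tp (f := fun c => TD (c * c'))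
      (g := fun c => (TD c').comp (Tr c) + (TD c).comp (Tl c'))
      (TD.continuous.comp (continuous_mul_right _))
      ((Continuous.clm_comp continuous_const Tr.continuous).add
        (Continuous.clm_comp TD.continuous continuous_const)) (by simp) ?_ ?_ c
    · intro x y hx hy
      simp only [add_mul, map_add, ContinuousLinearMap.comp_add,
        ContinuousLinearMap.add_comp, hx, hy]
      abel
    · intro a b; exact base a b c'
  -- the Banach bimodule over C
  let M' : BBimod C X :=
    { l := Tl
      r := Tr
      l_mul := fun c c' x => by rw [keyl]; rfl
      r_mul := fun c c' x => by rw [keyr]; rfl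
      lr := fun c c' x => DFunLike.congr_fun (keylr c c') x }
  have deriv' : M'.dual.IsDeriv TD := by
    intro c c'
    rw [M'.dual_l_apply, M'.dual_r_apply]
    exact keyd c c'
  obtain ⟨It, lff, fnet, hne, ht⟩ := h X M' TD deriv'
  refine ⟨It, lff, fnet, hne, ?_⟩
  intro a
  have hmu1 : muT uA uB (uA.ι a.1) 1 = (0, (a.1, 0)) := by
    rw [muT_apply, uA.ch_iota, uA.pr_iota, uB.ch_one, uB.pr_one]
    simp
  have hmu2 : muT uA uB 1 (uB.ι a.2) = (0, (0, a.2)) := by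
    rw [muT_apply, uB.ch_iota, uB.pr_iota, uA.ch_one, uA.pr_one]
    simp
  have hsum : ((a.1, 0) : A × B) + (0, a.2) = a := by
    ext <;> simp
  set c : C := t.tp (uA.ι a.1) 1 + t.tp 1 (uB.ι a.2) with hc
  have hN0 : ∀ (L : (A × B) →L[ℂ] X →L[ℂ] X) (q : A × B), NlOf L ((0 : ℂ), q) = L q := by
    intro L q; ext x; simp [NlOf_apply]
  have hTlc : Tl c = M.l a := by
    rw [hc, map_add, hTl, hTl, hmu1, hmu2, hN0, hN0, ← map_add, hsum]
  have hTrc : Tr c = M.r a := by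
    rw [hc, map_add, hTr, hTr, hmu1, hmu2, hN0, hN0, ← map_add, hsum]
  have hTDc : TD c = D a := by
    rw [hc, map_add, hTD, hTD, hmu1, hmu2]
    show D (a.1, 0) + D (0, a.2) = D a
    rw [← map_add, hsum]
  have heq : ∀ i, M'.dual.l c (fnet i) - M'.dual.r c (fnet i)
      = M.dual.l a (fnet i) - M.dual.r a (fnet i) := by
    intro i
    rw [M'.dual_l_apply, M'.dual_r_apply, M.dual_l_apply, M.dual_r_apply]
    show (fnet i).comp (Tr c) - (fnet i).comp (Tl c) = _
    rw [hTrc, hTlc]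
  have h2 := ht c
  rw [hTDc] at h2
  exact h2.congr heq
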